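/- arXiv:1605.00072 — 4 statements merged into one kernel-verified Lean document; each statement's English description precedes it below -/
import Mathlib

section
/- Let F be an arithmetic function for which there exist s ∈ ℤ_{≥0}, real numbers κ ∈ [0,1), β ≥ 0 and complex numbers a_0,…,a_s with a_s ≠ 0 such that for all z ≥ 1, ∑_{n ≤ z} (F ⋆ μ)(n) = z·∑_{j=0}^{s} a_j (log z)^j + O(z^κ (log ez)^β). Set f = F ⋆ μ. Then for any real numbers 1 ≤ t ≤ z, ∑_{z < n ≤ z+t} f(n) = t·a_s (log z)^s + O( t (log ez)^{s−1} + z^κ (log ez)^β ). -/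
open Finset

/-- Dirichlet convolution of two arithmetic functions (valued in `ℂ`). -/
noncomputable def dconv (f g : ℕ → ℂ) (n : ℕ) : ℂ :=
  ∑ d ∈ n.divisors, f d * g (n / d)

/-- The Möbius function, viewed as a complex-valued arithmetic function. -/
noncomputable def muC : ℕ → ℂ := fun n => (ArithmeticFunction.moebius n : ℂ)

lemma pow_sub_pow_le_aux' (x y Λ : ℝ) (hy : 0 ≤ y) (hxy : y ≤ x) (hxΛ : x ≤ Λ)
    (hΛ1 : 1 ≤ Λ) (s j : ℕ) (hj : j ≤ s) :
    x ^ j - y ^ j ≤ s * Λ ^ (s - 1) * (x - y) := by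
  have hx : 0 ≤ x := hy.trans hxy
  have hΛ : 0 ≤ Λ := hx.trans hxΛ
  have hyΛ : y ≤ Λ := hxy.trans hxΛ
  rw [← geom_sum₂_mul]
  have hbd : ∑ i ∈ range j, x ^ i * y ^ (j - 1 - i) ≤ s * Λ ^ (s - 1) := by
    calc ∑ i ∈ range j, x ^ i * y ^ (j - 1 - i)
        ≤ ∑ _i ∈ range j, Λ ^ (s - 1) := by
          apply Finset.sum_le_sum
          intro i hi
          have hij : i + (j - 1 - i) = j - 1 := by
            have := Finset.mem_range.mp hi; omega
          calc x ^ i * y ^ (j-1-i) ≤ Λ ^ i * Λ ^ (j-1-i) :=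
                mul_le_mul (pow_le_pow_left₀ hx hxΛ i) (pow_le_pow_left₀ hy hyΛ _)
                  (pow_nonneg hy _) (pow_nonneg hΛ _)
            _ = Λ ^ (j-1) := by rw [← pow_add, hij]
            _ ≤ Λ ^ (s-1) := pow_le_pow_right₀ hΛ1 (by omega)
      _ = j * Λ ^ (s-1) := by rw [Finset.sum_const, card_range, nsmul_eq_mul]
      _ ≤ s * Λ ^ (s-1) := by
          exact mul_le_mul_of_nonneg_right (by exact_mod_cast hj) (pow_nonneg hΛ _)
  exact mul_le_mul_of_nonneg_right hbd (sub_nonneg.mpr hxy)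

theorem stmt1 (s : ℕ) (κ β : ℝ) (hκ : 0 ≤ κ) (hκ' : κ < 1) (hβ : 0 ≤ β)
    (a : Fin (s + 1) → ℂ) (has : a (Fin.last s) ≠ 0)
    (F : ℕ → ℂ) (C₀ : ℝ)
    (h1 : ∀ z : ℝ, 1 ≤ z →
      ‖(∑ n ∈ Finset.Icc 1 ⌊z⌋₊, dconv F muC n) -
          (z : ℂ) * ∑ j : Fin (s + 1), a j * (Real.log z : ℂ) ^ (j : ℕ)‖ ≤
        C₀ * z ^ κ * Real.log (Real.exp 1 * z) ^ β) :
    ∃ C > 0, ∀ t z : ℝ, 1 ≤ t → t ≤ z →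
      ‖(∑ n ∈ Finset.Ioc ⌊z⌋₊ ⌊z + t⌋₊, dconv F muC n) -
          (t : ℂ) * a (Fin.last s) * (Real.log z : ℂ) ^ s‖ ≤
        C * (t * Real.log (Real.exp 1 * z) ^ ((s : ℝ) - 1) +
          z ^ κ * Real.log (Real.exp 1 * z) ^ β) := by
  have hC₀ : 0 ≤ C₀ := by
    have h0 := (norm_nonneg _).trans (h1 1 le_rfl)
    simpa using h0
  set A : ℝ := ∑ j : Fin (s + 1), ‖a j‖ with hA
  have hA0 : 0 ≤ A := Finset.sum_nonneg fun j _ => norm_nonneg _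
  refine ⟨A * (2 * s + 1) + C₀ * ((2:ℝ) ^ κ * (2:ℝ) ^ β + 1) + 1, by positivity, ?_⟩
  intro t z ht htz
  have hz : 1 ≤ z := ht.trans htz
  have hz0 : 0 < z := by linarith
  have ht0 : 0 < t := by linarith
  set L : ℝ := Real.log z with hLdef
  set L' : ℝ := Real.log (z + t) with hL'def
  set Λ : ℝ := Real.log (Real.exp 1 * z) with hΛdef
  have hΛ : Λ = 1 + L := by
    rw [hΛdef, Real.log_mul (Real.exp_ne_zero 1) (ne_of_gt hz0), Real.log_exp]
  have hL0 : 0 ≤ L := Real.log_nonneg hz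
  have hΛ1 : 1 ≤ Λ := by rw [hΛ]; linarith
  have hLL' : L ≤ L' := Real.log_le_log hz0 (by linarith)
  have hL'Λ : L' ≤ Λ := by
    have h2 : L' ≤ Real.log (2 * z) := Real.log_le_log (by linarith) (by linarith)
    have h3 : Real.log (2 * z) = Real.log 2 + L := Real.log_mul two_ne_zero (ne_of_gt hz0)
    have h4 : Real.log 2 ≤ 1 := by
      have := Real.log_le_sub_one_of_pos (by norm_num : (0:ℝ) < 2); linarith
    rw [hΛ]; linarith
  have hL'0 : 0 ≤ L' := hL0.trans hLL'
  have hL'L : L' - L ≤ t / z := by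
    have h5 : L' - L = Real.log ((z + t) / z) := by
      rw [Real.log_div (by linarith) (ne_of_gt hz0)]
    have h6 := Real.log_le_sub_one_of_pos (show 0 < (z + t) / z by positivity)
    have h7 : (z + t) / z - 1 = t / z := by field_simp; ring
    linarith [h5 ▸ h6]
  have htz1 : t / z ≤ 1 := (div_le_one hz0).mpr htz
  have htz0 : 0 ≤ t / z := by positivity
  -- sum splitting
  have hfloor : ⌊z⌋₊ ≤ ⌊z + t⌋₊ := Nat.floor_le_floor (by linarith)
  have hsplit : (∑ n ∈ Finset.Ioc ⌊z⌋₊ ⌊z + t⌋₊, dconv F muC n) =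
      (∑ n ∈ Finset.Icc 1 ⌊z + t⌋₊, dconv F muC n) -
        (∑ n ∈ Finset.Icc 1 ⌊z⌋₊, dconv F muC n) := by
    rw [show (1:ℕ) = 0 + 1 from rfl, Finset.Icc_add_one_left_eq_Ioc, Finset.Icc_add_one_left_eq_Ioc,
      eq_sub_iff_add_eq, add_comm]
    exact Finset.sum_Ioc_consecutive _ (Nat.zero_le _) hfloor
  set P : ℂ := ∑ j : Fin (s + 1), a j * (L : ℂ) ^ (j : ℕ) with hP
  set P' : ℂ := ∑ j : Fin (s + 1), a j * (L' : ℂ) ^ (j : ℕ) with hP'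
  have hE := h1 z hz
  have hE' := h1 (z + t) (by linarith)
  rw [← hLdef, ← hΛdef, ← hP] at hE
  rw [← hL'def, ← hP'] at hE'
  -- error bound at z+t
  have hE'2 : ‖(∑ n ∈ Finset.Icc 1 ⌊z + t⌋₊, dconv F muC n) - ((z + t : ℝ) : ℂ) * P'‖ ≤
      C₀ * ((2:ℝ) ^ κ * (2:ℝ) ^ β) * (z ^ κ * Λ ^ β) := by
    refine hE'.trans ?_
    have ha1 : (z + t) ^ κ ≤ (2:ℝ) ^ κ * z ^ κ := by
      rw [← Real.mul_rpow (by norm_num) (le_of_lt hz0)]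
      exact Real.rpow_le_rpow (by linarith) (by linarith) hκ
    have ha2 : Real.log (Real.exp 1 * (z + t)) ^ β ≤ (2:ℝ) ^ β * Λ ^ β := by
      rw [← Real.mul_rpow (by norm_num) (by linarith : (0:ℝ) ≤ Λ)]
      apply Real.rpow_le_rpow _ _ hβ
      · rw [Real.log_mul (Real.exp_ne_zero 1) (by linarith), Real.log_exp, ← hL'def]
        linarith
      · rw [Real.log_mul (Real.exp_ne_zero 1) (by linarith), Real.log_exp, ← hL'def]
        linarith
    calc C₀ * (z + t) ^ κ * Real.log (Real.exp 1 * (z + t)) ^ β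
        ≤ C₀ * ((2:ℝ) ^ κ * z ^ κ) * ((2:ℝ) ^ β * Λ ^ β) := by
          have he1 : (1:ℝ) ≤ Real.exp 1 := by nlinarith [Real.add_one_le_exp (1:ℝ)]
          have hlog0' : 0 ≤ Real.log (Real.exp 1 * (z + t)) :=
            Real.log_nonneg (by nlinarith)
          exact mul_le_mul (mul_le_mul_of_nonneg_left ha1 hC₀) ha2
            (Real.rpow_nonneg hlog0' β) (by positivity)
      _ = C₀ * ((2:ℝ) ^ κ * (2:ℝ) ^ β) * (z ^ κ * Λ ^ β) := by ring
  -- main term bound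
  set Λr : ℝ := Λ ^ ((s:ℝ) - 1) with hΛr
  have hΛ0' : (0:ℝ) ≤ Λ := by linarith
  have hΛr0 : 0 ≤ Λr := Real.rpow_nonneg hΛ0' _
  have hM : ‖((z:ℝ):ℂ) * P' + ((t:ℝ):ℂ) * P' - ((z:ℝ):ℂ) * P -
      ((t:ℝ):ℂ) * a (Fin.last s) * ((L:ℝ):ℂ) ^ s‖ ≤ A * (2 * (s:ℝ) + 1) * (t * Λr) := by
    rcases Nat.eq_zero_or_pos s with hs0 | hs1
    · subst hs0
      have e1 : P' = a (Fin.last 0) := by rw [hP', Fin.sum_univ_one]; simp [Fin.last]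
      have e2 : P = a (Fin.last 0) := by rw [hP, Fin.sum_univ_one]; simp [Fin.last]
      rw [e1, e2]
      have e3 : ((z:ℝ):ℂ) * a (Fin.last 0) + ((t:ℝ):ℂ) * a (Fin.last 0) -
          ((z:ℝ):ℂ) * a (Fin.last 0) - ((t:ℝ):ℂ) * a (Fin.last 0) * ((L:ℝ):ℂ) ^ 0 = 0 := by
        ring
      rw [e3, norm_zero]
      positivity
    · have hpow : ∀ j : ℕ, j ≤ s → L' ^ j - L ^ j ≤ (s:ℝ) * Λ ^ (s-1) * (t/z) := by
        intro j hj
        refine (pow_sub_pow_le_aux' L' L Λ hL0 hLL' hL'Λ hΛ1 s j hj).trans ?_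
        exact mul_le_mul_of_nonneg_left hL'L (by positivity)
      have hPP' : ‖P' - P‖ ≤ A * ((s:ℝ) * Λ ^ (s-1) * (t/z)) := by
        rw [hP', hP, ← Finset.sum_sub_distrib]
        simp only [← mul_sub]
        refine (norm_sum_le _ _).trans ?_
        calc ∑ j : Fin (s+1), ‖a j * (((L':ℝ):ℂ) ^ (j:ℕ) - ((L:ℝ):ℂ) ^ (j:ℕ))‖
            ≤ ∑ j : Fin (s+1), ‖a j‖ * ((s:ℝ) * Λ ^ (s-1) * (t/z)) := by
              apply Finset.sum_le_sum
              intro j _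
              rw [norm_mul]
              apply mul_le_mul_of_nonneg_left _ (norm_nonneg _)
              have hc : ((L':ℝ):ℂ) ^ (j:ℕ) - ((L:ℝ):ℂ) ^ (j:ℕ) =
                  ((L' ^ (j:ℕ) - L ^ (j:ℕ) : ℝ) : ℂ) := by push_cast; ring
              rw [hc, Complex.norm_real, Real.norm_eq_abs,
                abs_of_nonneg (sub_nonneg.mpr (pow_le_pow_left₀ hL0 hLL' _))]
              exact hpow j (Fin.is_le j)
          _ = A * ((s:ℝ) * Λ ^ (s-1) * (t/z)) := by rw [hA, ← Finset.sum_mul]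
      have hsub1 : (∑ j : Fin s, ‖a j.castSucc‖) ≤ A := by
        rw [hA, Fin.sum_univ_castSucc]
        exact le_add_of_nonneg_right (norm_nonneg _)
      have hlastA : ‖a (Fin.last s)‖ ≤ A := by
        rw [hA]
        exact Finset.single_le_sum (fun j _ => norm_nonneg (a j)) (Finset.mem_univ _)
      have hQ' : ‖∑ j : Fin s, a j.castSucc * ((L':ℝ):ℂ) ^ (j:ℕ)‖ ≤ A * Λ ^ (s-1) := by
        refine (norm_sum_le _ _).trans ?_
        calc ∑ j : Fin s, ‖a j.castSucc * ((L':ℝ):ℂ) ^ (j:ℕ)‖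
            ≤ ∑ j : Fin s, ‖a j.castSucc‖ * Λ ^ (s-1) := by
              apply Finset.sum_le_sum
              intro j _
              rw [norm_mul, norm_pow, Complex.norm_real, Real.norm_eq_abs, abs_of_nonneg hL'0]
              apply mul_le_mul_of_nonneg_left _ (norm_nonneg _)
              calc L' ^ (j:ℕ) ≤ Λ ^ (j:ℕ) := pow_le_pow_left₀ hL'0 hL'Λ _
                _ ≤ Λ ^ (s-1) := pow_le_pow_right₀ hΛ1 (by have := j.isLt; omega)
          _ = (∑ j : Fin s, ‖a j.castSucc‖) * Λ ^ (s-1) := (Finset.sum_mul _ _ _).symm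
          _ ≤ A * Λ ^ (s-1) := mul_le_mul_of_nonneg_right hsub1 (pow_nonneg hΛ0' _)
      have hP'split : P' = (∑ j : Fin s, a j.castSucc * ((L':ℝ):ℂ) ^ (j:ℕ)) +
          a (Fin.last s) * ((L':ℝ):ℂ) ^ s := by
        rw [hP', Fin.sum_univ_castSucc]; simp
      have hM2 : ‖P' - a (Fin.last s) * ((L:ℝ):ℂ) ^ s‖ ≤
          A * Λ ^ (s-1) + A * ((s:ℝ) * Λ ^ (s-1)) := by
        rw [hP'split]
        have e4 : (∑ j : Fin s, a j.castSucc * ((L':ℝ):ℂ) ^ (j:ℕ)) +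
            a (Fin.last s) * ((L':ℝ):ℂ) ^ s - a (Fin.last s) * ((L:ℝ):ℂ) ^ s =
            (∑ j : Fin s, a j.castSucc * ((L':ℝ):ℂ) ^ (j:ℕ)) +
            a (Fin.last s) * (((L':ℝ):ℂ) ^ s - ((L:ℝ):ℂ) ^ s) := by ring
        rw [e4]
        refine (norm_add_le _ _).trans (add_le_add hQ' ?_)
        rw [norm_mul]
        have hc : ((L':ℝ):ℂ) ^ s - ((L:ℝ):ℂ) ^ s = ((L' ^ s - L ^ s : ℝ) : ℂ) := by
          push_cast; ring
        rw [hc, Complex.norm_real, Real.norm_eq_abs,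
          abs_of_nonneg (sub_nonneg.mpr (pow_le_pow_left₀ hL0 hLL' _))]
        have hsΛ : (0:ℝ) ≤ (s:ℝ) * Λ ^ (s-1) := by positivity
        calc ‖a (Fin.last s)‖ * (L' ^ s - L ^ s)
            ≤ A * ((s:ℝ) * Λ ^ (s-1) * (t/z)) :=
              mul_le_mul hlastA (hpow s le_rfl)
                (sub_nonneg.mpr (pow_le_pow_left₀ hL0 hLL' _)) hA0
          _ ≤ A * ((s:ℝ) * Λ ^ (s-1)) := by
              apply mul_le_mul_of_nonneg_left _ hA0
              calc (s:ℝ) * Λ ^ (s-1) * (t/z) ≤ (s:ℝ) * Λ ^ (s-1) * 1 :=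
                    mul_le_mul_of_nonneg_left htz1 hsΛ
                _ = (s:ℝ) * Λ ^ (s-1) := mul_one _
      have hΛreq : Λr = Λ ^ (s-1) := by
        rw [hΛr, show (s:ℝ) - 1 = ((s - 1 : ℕ) : ℝ) by
          rw [Nat.cast_sub hs1]; norm_num, Real.rpow_natCast]
      have hMid : ((z:ℝ):ℂ) * P' + ((t:ℝ):ℂ) * P' - ((z:ℝ):ℂ) * P -
          ((t:ℝ):ℂ) * a (Fin.last s) * ((L:ℝ):ℂ) ^ s =
          ((z:ℝ):ℂ) * (P' - P) + ((t:ℝ):ℂ) * (P' - a (Fin.last s) * ((L:ℝ):ℂ) ^ s) := by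
        ring
      rw [hMid]
      refine (norm_add_le _ _).trans ?_
      rw [norm_mul, norm_mul, Complex.norm_real, Complex.norm_real, Real.norm_eq_abs,
        Real.norm_eq_abs, abs_of_pos hz0, abs_of_pos ht0, hΛreq]
      have hz1 : z * ‖P' - P‖ ≤ A * ((s:ℝ) * Λ ^ (s-1)) * t := by
        have h8 := mul_le_mul_of_nonneg_left hPP' (le_of_lt hz0)
        have hzz : z * (A * ((s:ℝ) * Λ ^ (s-1) * (t/z))) = A * ((s:ℝ) * Λ ^ (s-1)) * t := by
          field_simp
        linarith [hzz ▸ h8]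
      have ht1 : t * ‖P' - a (Fin.last s) * ((L:ℝ):ℂ) ^ s‖ ≤
          t * (A * Λ ^ (s-1) + A * ((s:ℝ) * Λ ^ (s-1))) :=
        mul_le_mul_of_nonneg_left hM2 (le_of_lt ht0)
      have hr : A * ((s:ℝ) * Λ ^ (s-1)) * t + t * (A * Λ ^ (s-1) + A * ((s:ℝ) * Λ ^ (s-1)))
          = A * (2 * (s:ℝ) + 1) * (t * Λ ^ (s-1)) := by ring
      linarith [hz1, ht1]
  -- assembly
  have hid : (∑ n ∈ Finset.Icc 1 ⌊z + t⌋₊, dconv F muC n) -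
      (∑ n ∈ Finset.Icc 1 ⌊z⌋₊, dconv F muC n) -
      ((t:ℝ):ℂ) * a (Fin.last s) * ((L:ℝ):ℂ) ^ s =
      ((∑ n ∈ Finset.Icc 1 ⌊z + t⌋₊, dconv F muC n) - ((z + t : ℝ) : ℂ) * P') -
      ((∑ n ∈ Finset.Icc 1 ⌊z⌋₊, dconv F muC n) - ((z:ℝ):ℂ) * P) +
      (((z:ℝ):ℂ) * P' + ((t:ℝ):ℂ) * P' - ((z:ℝ):ℂ) * P -
        ((t:ℝ):ℂ) * a (Fin.last s) * ((L:ℝ):ℂ) ^ s) := by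
    push_cast
    ring
  rw [hsplit, hid]
  have hX0 : (0:ℝ) ≤ z ^ κ * Λ ^ β := by positivity
  have hY0 : (0:ℝ) ≤ t * Λr := mul_nonneg (le_of_lt ht0) hΛr0
  refine ((norm_add_le _ _).trans (add_le_add (norm_sub_le _ _) le_rfl)).trans ?_
  have hpos1 : (0:ℝ) ≤ (2:ℝ) ^ κ * (2:ℝ) ^ β := by positivity
  have hring : (A * (2 * (s:ℝ) + 1) + C₀ * ((2:ℝ) ^ κ * (2:ℝ) ^ β + 1) + 1) *
      (t * Λr + z ^ κ * Λ ^ β) =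
      A * (2 * (s:ℝ) + 1) * (t * Λr) + C₀ * ((2:ℝ) ^ κ * (2:ℝ) ^ β) * (z ^ κ * Λ ^ β) +
      C₀ * (z ^ κ * Λ ^ β) + C₀ * ((2:ℝ) ^ κ * (2:ℝ) ^ β + 1) * (t * Λr) + t * Λr +
      A * (2 * (s:ℝ) + 1) * (z ^ κ * Λ ^ β) + z ^ κ * Λ ^ β := by ring
  have hn1 : (0:ℝ) ≤ C₀ * ((2:ℝ) ^ κ * (2:ℝ) ^ β + 1) * (t * Λr) :=
    mul_nonneg (mul_nonneg hC₀ (by positivity)) hY0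
  have hn2 : (0:ℝ) ≤ A * (2 * (s:ℝ) + 1) * (z ^ κ * Λ ^ β) :=
    mul_nonneg (mul_nonneg hA0 (by positivity)) hX0
  linarith [hE'2, hE, hM]
end

section
/- Let F be any arithmetic function, f = F ⋆ μ its Eratosthenes transform, and let e^e < y ≤ x be real numbers. Define Σ_F(N,x,y) := ∑_{N < n ≤ 2N} f(n)·(ψ((x+y)/n) − ψ(x/n)) for y < N ≤ x. Then for any integers N ∈ (y, x] and H ≥ 1, Σ_F(N,x,y) = −∫_x^{x+y} ∑_{0 < |h| ≤ H} ∑_{N < n ≤ 2N} (f(n)/n)·e(h t / n) dt + O( max_{x ≤ z ≤ x+y} ∑_{N < n ≤ 2N} |f(n)| · min(1, 1/(H·‖z/n‖)) ). -/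
open Finset

/-- The first Bernoulli function `ψ(t) = t − ⌊t⌋ − 1/2`. -/
noncomputable def psiB (t : ℝ) : ℝ := t - ⌊t⌋ - 1 / 2

/-- The additive character `e(t) = e^{2πit}`. -/
noncomputable def eC (t : ℝ) : ℂ := Complex.exp (2 * Real.pi * Complex.I * t)

/-- `‖t‖`, the distance from `t` to its nearest integer. -/
noncomputable def nearInt (t : ℝ) : ℝ := |t - round t|

/-- `min(1, 1/(H·‖t‖))`, interpreted as `1` when `‖t‖ = 0`. -/
noncomputable def kernel (H : ℕ) (t : ℝ) : ℝ :=
  if nearInt t = 0 then 1 else min 1 (1 / (H * nearInt t))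

noncomputable def SH (H : ℕ) (u : ℝ) : ℝ :=
  ∑ h ∈ Finset.Icc 1 H, Real.sin (2 * Real.pi * h * u) / (Real.pi * h)

noncomputable def DD (H : ℕ) (u : ℝ) : ℝ := psiB u + SH H u

lemma kernel_nonneg (H : ℕ) (t : ℝ) : 0 ≤ kernel H t := by
  unfold kernel
  split
  · norm_num
  · rename_i h
    have h1 : 0 < nearInt t := lt_of_le_of_ne (abs_nonneg _) (Ne.symm h)
    refine le_min (by norm_num) (by positivity)

lemma kernel_le_one (H : ℕ) (t : ℝ) : kernel H t ≤ 1 := by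
  unfold kernel; split
  · exact le_refl 1
  · exact min_le_left _ _

lemma dirichlet_id (H : ℕ) (t : ℝ) :
    Real.sin (Real.pi * t) * (1 + ∑ h ∈ Finset.Icc 1 H, 2 * Real.cos (2 * Real.pi * h * t))
      = Real.sin ((2 * H + 1) * Real.pi * t) := by
  induction H with
  | zero => simp
  | succ H ih =>
    rw [Finset.sum_Icc_succ_top (by omega)]
    have key : Real.sin ((2 * (H:ℝ) + 3) * Real.pi * t)
        = Real.sin ((2 * (H:ℝ) + 1) * Real.pi * t)
          + 2 * Real.sin (Real.pi * t) * Real.cos (2 * Real.pi * ((H:ℝ) + 1) * t) := by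
      rw [show (2*(H:ℝ)+3) * Real.pi * t = (2*Real.pi*((H:ℝ)+1)*t) + Real.pi*t by ring,
          show (2*(H:ℝ)+1) * Real.pi * t = (2*Real.pi*((H:ℝ)+1)*t) - Real.pi*t by ring,
          Real.sin_add, Real.sin_sub]
      ring
    push_cast
    push_cast at ih
    rw [show (2*((H:ℝ)+1)+1) = 2*(H:ℝ)+3 by ring, key]
    linear_combination ih

lemma SH_hasDeriv (H : ℕ) (t : ℝ) :
    HasDerivAt (SH H) (∑ h ∈ Finset.Icc 1 H, 2 * Real.cos (2 * Real.pi * h * t)) t := by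
  show HasDerivAt (fun u => ∑ h ∈ Finset.Icc 1 H, Real.sin (2 * Real.pi * h * u) / (Real.pi * h)) _ t
  apply HasDerivAt.fun_sum
  intro h hh
  have hh1 : 1 ≤ h := (Finset.mem_Icc.mp hh).1
  have hhR : (0:ℝ) < h := by exact_mod_cast hh1
  have hpi := Real.pi_pos
  have h1 : HasDerivAt (fun u : ℝ => 2 * Real.pi * h * u) (2 * Real.pi * h) t := by
    simpa using (hasDerivAt_id t).const_mul (2 * Real.pi * (h:ℝ))
  have h2 : HasDerivAt (fun u : ℝ => Real.sin (2 * Real.pi * h * u))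
      (Real.cos (2 * Real.pi * h * t) * (2 * Real.pi * h)) t :=
    (Real.hasDerivAt_sin _).comp t h1
  have h3 := h2.div_const (Real.pi * h)
  have e : 2 * Real.cos (2 * Real.pi * h * t)
      = Real.cos (2 * Real.pi * h * t) * (2 * Real.pi * h) / (Real.pi * h) := by
    rw [eq_div_iff (by positivity)]; ring
  rw [e]; exact h3

lemma psiB_hasDeriv {t : ℝ} (h0 : 0 < t) (h1 : t < 1) : HasDerivAt psiB 1 t := by
  have hbase : HasDerivAt (fun u : ℝ => u - 1/2) 1 t := by
    simpa using (hasDerivAt_id t).sub_const (1/2 : ℝ)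
  refine hbase.congr_of_eventuallyEq ?_
  filter_upwards [Ioo_mem_nhds h0 h1] with w hw
  unfold psiB
  rw [Int.floor_eq_zero_iff.mpr ⟨hw.1.le, hw.2⟩]
  norm_num

lemma DD_eq_integral (H : ℕ) {v : ℝ} (hv0 : 0 < v) (hv : v ≤ 1/2) :
    DD H v = -(∫ t in v..(1/2 : ℝ),
      (1 + ∑ h ∈ Finset.Icc 1 H, 2 * Real.cos (2 * Real.pi * h * t))) := by
  have hD12 : DD H (1/2 : ℝ) = 0 := by
    unfold DD psiB SH
    have hz : ∀ h ∈ Finset.Icc 1 H, Real.sin (2*Real.pi*h*(1/2:ℝ))/(Real.pi*h) = 0 := by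
      intro h _
      rw [show 2*Real.pi*(h:ℝ)*(1/2:ℝ) = (h:ℝ)*Real.pi by ring, Real.sin_nat_mul_pi, zero_div]
    rw [Finset.sum_congr rfl hz, Finset.sum_const_zero]
    rw [show ⌊(1:ℝ)/2⌋ = 0 from Int.floor_eq_zero_iff.mpr (by constructor <;> norm_num)]
    norm_num
  have hderiv : ∀ t ∈ Set.uIcc v (1/2:ℝ),
      HasDerivAt (DD H) (1 + ∑ h ∈ Finset.Icc 1 H, 2*Real.cos (2*Real.pi*h*t)) t := by
    intro t ht
    rw [Set.uIcc_of_le (by linarith)] at ht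
    exact (psiB_hasDeriv (lt_of_lt_of_le hv0 ht.1) (lt_of_le_of_lt ht.2 (by norm_num))).add
      (SH_hasDeriv H t)
  have hint : IntervalIntegrable
      (fun t => 1 + ∑ h ∈ Finset.Icc 1 H, 2*Real.cos (2*Real.pi*h*t))
      MeasureTheory.volume v (1/2) := (Continuous.intervalIntegrable (by fun_prop) _ _)
  rw [intervalIntegral.integral_eq_sub_of_hasDerivAt hderiv hint, hD12]
  ring

lemma heart (H : ℕ) (hH : 1 ≤ H) {v : ℝ} (hv0 : 0 < v) (hv : v ≤ 1/2) :
    |DD H v| ≤ 1 / ((H:ℝ) * v) := by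
  have hpi := Real.pi_pos
  have hpigt : (3:ℝ) < Real.pi := by
    have := Real.pi_gt_d6; linarith
  have hHpos : (0:ℝ) < H := by exact_mod_cast hH
  set A : ℝ := (2*H+1) * Real.pi with hA
  have hApos : 0 < A := by positivity
  have hsin_pos : ∀ t ∈ Set.Icc v (1/2:ℝ), 0 < Real.sin (Real.pi * t) := by
    intro t ht
    obtain ⟨ht1, ht2⟩ := ht
    apply Real.sin_pos_of_pos_of_lt_pi
    · nlinarith
    · nlinarith
  set g : ℝ → ℝ := fun t => (Real.sin (Real.pi * t))⁻¹ with hg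
  set g' : ℝ → ℝ := fun t => -(Real.pi * Real.cos (Real.pi * t)) / (Real.sin (Real.pi * t))^2
    with hg'
  have hsinderiv : ∀ t : ℝ, HasDerivAt (fun u : ℝ => Real.sin (Real.pi * u))
      (Real.cos (Real.pi * t) * Real.pi) t := by
    intro t
    exact (Real.hasDerivAt_sin _).comp t
      (by simpa using (hasDerivAt_id t).const_mul Real.pi)
  have hgderiv : ∀ t ∈ Set.Icc v (1/2:ℝ), HasDerivAt g (g' t) t := by
    intro t ht
    have := (hsinderiv t).inv (ne_of_gt (hsin_pos t ht))
    have e : g' t = -(Real.cos (Real.pi * t) * Real.pi) / Real.sin (Real.pi * t) ^ 2 := by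
      rw [hg']
      ring
    rw [e]; exact this
  have hK0 : ∀ t ∈ Set.uIcc v (1/2:ℝ),
      (1 + ∑ h ∈ Finset.Icc 1 H, 2*Real.cos (2*Real.pi*h*t)) = g t * Real.sin (A * t) := by
    intro t ht
    rw [Set.uIcc_of_le (by linarith)] at ht
    have hs := hsin_pos t ht
    have hd := dirichlet_id H t
    rw [hg]
    rw [show A * t = (2*(H:ℝ)+1) * Real.pi * t by rw [hA]]
    field_simp
    rw [show Real.pi * t * (2 * (H:ℝ) + 1) = (2*(H:ℝ)+1)*Real.pi*t by ring, ← hd]; ring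
  rw [DD_eq_integral H hv0 hv, abs_neg, intervalIntegral.integral_congr hK0]
  have hvderiv : ∀ t ∈ Set.uIcc v (1/2:ℝ),
      HasDerivAt (fun u => -Real.cos (A*u)/A) (Real.sin (A*t)) t := by
    intro t _
    have h1 : HasDerivAt (fun u : ℝ => Real.cos (A*u)) (-Real.sin (A*t) * A) t :=
      (Real.hasDerivAt_cos _).comp t (by simpa using (hasDerivAt_id t).const_mul A)
    have h2 := h1.neg.div_const A
    have e : Real.sin (A*t) = -(-Real.sin (A*t) * A) / A := by
      rw [neg_mul, neg_neg, mul_div_cancel_right₀ _ hApos.ne']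
    rw [e]; exact h2
  have hgderiv' : ∀ t ∈ Set.uIcc v (1/2:ℝ), HasDerivAt g (g' t) t := by
    rw [Set.uIcc_of_le (by linarith)]; exact hgderiv
  have hcont_g' : ContinuousOn g' (Set.Icc v (1/2:ℝ)) := by
    apply ContinuousOn.div (by fun_prop) (by fun_prop)
    intro t ht
    exact pow_ne_zero 2 (ne_of_gt (hsin_pos t ht))
  have hg'int : IntervalIntegrable g' MeasureTheory.volume v (1/2) := by
    apply ContinuousOn.intervalIntegrable
    rw [Set.uIcc_of_le (by linarith)]
    exact hcont_g'
  have hsinint : IntervalIntegrable (fun t => Real.sin (A*t)) MeasureTheory.volume v (1/2) :=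
    (Continuous.intervalIntegrable (by fun_prop) _ _)
  rw [intervalIntegral.integral_mul_deriv_eq_deriv_mul hgderiv' hvderiv hg'int hsinint]
  have hgv : g v ≤ 1/(2*v) := by
    have h2v : 2*v ≤ Real.sin (Real.pi*v) := by
      have hms := Real.mul_le_sin (x := Real.pi*v) (by positivity) (by nlinarith)
      calc 2*v = 2/Real.pi * (Real.pi*v) := by field_simp
        _ ≤ _ := hms
    show (Real.sin (Real.pi * v))⁻¹ ≤ 1/(2*v)
    rw [inv_eq_one_div]
    exact one_div_le_one_div_of_le (by positivity) h2v
  have hgv_pos : 0 < g v := inv_pos.mpr (hsin_pos v ⟨le_refl v, hv⟩)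
  have hg12 : g (1/2 : ℝ) = 1 := by
    rw [hg]
    norm_num [show Real.pi * (1/2 : ℝ) = Real.pi/2 by ring, Real.sin_pi_div_two]
  have hmono : ∀ t ∈ Set.Icc v (1/2:ℝ), g' t ≤ 0 := by
    intro t ht
    obtain ⟨ht1, ht2⟩ := ht
    rw [hg']
    apply div_nonpos_of_nonpos_of_nonneg
    · have hc : 0 ≤ Real.cos (Real.pi * t) := by
        apply Real.cos_nonneg_of_mem_Icc
        constructor <;> nlinarith
      nlinarith
    · positivity
  have hIb : |∫ t in v..(1/2:ℝ), g' t * (-Real.cos (A*t)/A)| ≤ (g v - g (1/2:ℝ))/A := by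
    have hintabs : IntervalIntegrable (fun t => |g' t * (-Real.cos (A*t)/A)|)
        MeasureTheory.volume v (1/2) := by
      apply ContinuousOn.intervalIntegrable
      rw [Set.uIcc_of_le (by linarith)]
      exact (hcont_g'.mul (by fun_prop)).abs
    have hintub : IntervalIntegrable (fun t => (-(g' t))/A) MeasureTheory.volume v (1/2) := by
      apply ContinuousOn.intervalIntegrable
      rw [Set.uIcc_of_le (by linarith)]
      exact (hcont_g'.neg).div_const A
    calc |∫ t in v..(1/2:ℝ), g' t * (-Real.cos (A*t)/A)|
        ≤ ∫ t in v..(1/2:ℝ), |g' t * (-Real.cos (A*t)/A)| :=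
          intervalIntegral.abs_integral_le_integral_abs (by linarith)
      _ ≤ ∫ t in v..(1/2:ℝ), (-(g' t))/A := by
          apply intervalIntegral.integral_mono_on (by linarith) hintabs hintub
          intro t ht
          have h1 : |g' t| = -(g' t) := abs_of_nonpos (hmono t ht)
          have h2 : |(-Real.cos (A*t)/A)| ≤ 1/A := by
            rw [abs_div, abs_neg, abs_of_pos hApos]
            exact div_le_div_of_nonneg_right (Real.abs_cos_le_one _) hApos.le
          calc |g' t * (-Real.cos (A*t)/A)| = |g' t| * |(-Real.cos (A*t)/A)| := abs_mul _ _
            _ ≤ (-(g' t)) * (1/A) := by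
                rw [h1]
                apply mul_le_mul_of_nonneg_left h2
                linarith [hmono t ht]
            _ = (-(g' t))/A := by ring
      _ = (g v - g (1/2:ℝ))/A := by
          have hd : ∀ t ∈ Set.uIcc v (1/2:ℝ),
              HasDerivAt (fun u => (-(g u))/A) ((-(g' t))/A) t := fun t ht =>
            ((hgderiv' t ht).neg).div_const A
          rw [intervalIntegral.integral_eq_sub_of_hasDerivAt hd hintub]
          ring
  have tri : ∀ a b c : ℝ, |a - b - c| ≤ |a| + |b| + |c| := by
    intro a b c
    calc |a - b - c| = |a + -b + -c| := by ring_nf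
      _ ≤ |a + -b| + |-c| := abs_add_le _ _
      _ ≤ |a| + |-b| + |-c| := add_le_add_left (abs_add_le _ _) _
      _ = |a| + |b| + |c| := by rw [abs_neg, abs_neg]
  have habs_term : ∀ w : ℝ, |(-Real.cos (A*w)/A)| ≤ 1/A := by
    intro w
    rw [abs_div, abs_neg, abs_of_pos hApos]
    exact div_le_div_of_nonneg_right (Real.abs_cos_le_one _) hApos.le
  have hb1 : |g (1/2:ℝ) * (-Real.cos (A*(1/2:ℝ))/A)| ≤ 1/A := by
    rw [abs_mul, hg12, abs_one, one_mul]
    exact habs_term _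
  have hb2 : |g v * (-Real.cos (A*v)/A)| ≤ g v / A := by
    rw [abs_mul, abs_of_pos hgv_pos]
    calc g v * |(-Real.cos (A*v)/A)| ≤ g v * (1/A) :=
          mul_le_mul_of_nonneg_left (habs_term _) hgv_pos.le
      _ = g v / A := by ring
  calc |g (1/2:ℝ) * (-Real.cos (A*(1/2:ℝ))/A) - g v * (-Real.cos (A*v)/A)
        - ∫ t in v..(1/2:ℝ), g' t * (-Real.cos (A*t)/A)|
      ≤ |g (1/2:ℝ) * (-Real.cos (A*(1/2:ℝ))/A)| + |g v * (-Real.cos (A*v)/A)|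
        + |∫ t in v..(1/2:ℝ), g' t * (-Real.cos (A*t)/A)| := tri _ _ _
    _ ≤ 1/A + g v / A + (g v - g (1/2:ℝ))/A := by
        refine add_le_add (add_le_add hb1 hb2) hIb
    _ = 2 * g v / A + (1 - g (1/2:ℝ))/A := by ring
    _ = 2 * g v / A := by rw [hg12]; ring
    _ ≤ 2 * (1/(2*v)) / A := by
        refine div_le_div_of_nonneg_right ?_ hApos.le
        linarith
    _ = 1/(v * A) := by field_simp
    _ ≤ 1 / ((H:ℝ) * v) := by
        apply one_div_le_one_div_of_le (by positivity)
        have hHA : (H:ℝ) ≤ A := by rw [hA]; nlinarith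
        nlinarith [mul_le_mul_of_nonneg_left hHA hv0.le]

lemma posCase (H : ℕ) (hH : 1 ≤ H) {v : ℝ} (hv0 : 0 < v) (hv : v ≤ 1/2) :
    |DD H v| ≤ 3 * min 1 (1/((H:ℝ)*v)) := by
  have hHpos : (0:ℝ) < H := by exact_mod_cast hH
  have hHv : 0 < (H:ℝ)*v := by positivity
  rcases le_or_gt ((H:ℝ)*v) 1 with hc | hc
  · rw [min_eq_left (by rw [le_div_iff₀ hHv]; linarith)]
    have h1 : |psiB v| ≤ 1/2 := by
      unfold psiB
      rw [Int.floor_eq_zero_iff.mpr ⟨hv0.le, by linarith⟩]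
      rw [abs_le]
      norm_num
      constructor <;> linarith
    have h2 : |SH H v| ≤ 2 * ((H:ℝ) * v) := by
      unfold SH
      calc |∑ h ∈ Finset.Icc 1 H, Real.sin (2*Real.pi*h*v)/(Real.pi*h)|
          ≤ ∑ h ∈ Finset.Icc 1 H, |Real.sin (2*Real.pi*h*v)/(Real.pi*h)| :=
            Finset.abs_sum_le_sum_abs _ _
        _ ≤ ∑ _h ∈ Finset.Icc 1 H, 2*v := by
            apply Finset.sum_le_sum
            intro h hh
            have hh1 : (1:ℝ) ≤ h := by exact_mod_cast (Finset.mem_Icc.mp hh).1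
            have hπh : 0 < Real.pi * h := by positivity
            rw [abs_div, abs_of_pos hπh, div_le_iff₀ hπh]
            calc |Real.sin (2*Real.pi*h*v)| ≤ |2*Real.pi*h*v| := Real.abs_sin_le_abs
              _ = 2*Real.pi*h*v := abs_of_nonneg (by positivity)
              _ = 2*v*(Real.pi*h) := by ring
        _ = (H:ℝ) * (2*v) := by
            rw [Finset.sum_const, Nat.card_Icc]
            simp [nsmul_eq_mul]
        _ = 2 * ((H:ℝ)*v) := by ring
    have hDD : |DD H v| ≤ |psiB v| + |SH H v| := by
      unfold DD; exact abs_add_le _ _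
    linarith
  · rw [min_eq_right (by rw [div_le_one hHv]; linarith)]
    have h1 := heart H hH hv0 hv
    have h2 : 0 ≤ 1/((H:ℝ)*v) := by positivity
    linarith

lemma DD_per (H : ℕ) (w : ℝ) (k : ℤ) : DD H (w + k) = DD H w := by
  unfold DD psiB SH
  rw [Int.floor_add_intCast]
  have hz : ∀ h ∈ Finset.Icc 1 H,
      Real.sin (2*Real.pi*h*(w+(k:ℝ)))/(Real.pi*h) = Real.sin (2*Real.pi*h*w)/(Real.pi*h) := by
    intro h _
    rw [show 2*Real.pi*(h:ℝ)*(w+(k:ℝ)) = 2*Real.pi*h*w + ((h*k : ℤ):ℝ)*(2*Real.pi) by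
      push_cast; ring, Real.sin_add_int_mul_two_pi]
  rw [Finset.sum_congr rfl hz]
  push_cast
  ring

lemma nearInt_per (w : ℝ) (k : ℤ) : nearInt (w + k) = nearInt w := by
  unfold nearInt
  rw [round_add_intCast]
  congr 1
  push_cast
  ring

lemma kernel_per (H : ℕ) (w : ℝ) (k : ℤ) : kernel H (w + k) = kernel H w := by
  unfold kernel
  rw [nearInt_per]

lemma core (H : ℕ) (hH : 1 ≤ H) (u : ℝ) : |DD H u| ≤ 3 * kernel H u := by
  set k := round u with hk
  set v := u - k with hvdef
  have hv_lb : -(1/2) ≤ v := by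
    have h := abs_sub_round u
    rw [abs_le] at h
    exact h.1
  have hv_ub : v < 1/2 := by
    rw [hvdef, hk, round_eq]
    have h1 := Int.fract_lt_one (u + 1/2)
    have h2 : u - (⌊u + 1/2⌋ : ℝ) = Int.fract (u + 1/2) - 1/2 := by
      rw [Int.fract]; ring
    linarith
  have hu : u = v + k := by rw [hvdef]; ring
  rw [hu, DD_per, kernel_per]
  have hround : round v = 0 := by
    rw [round_eq, Int.floor_eq_zero_iff]
    constructor
    · norm_num; linarith
    · norm_num; linarith
  have hnear : nearInt v = |v| := by
    unfold nearInt
    rw [hround]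
    norm_num
  rcases lt_trichotomy v 0 with hneg | hzero | hpos
  · have hfl : ⌊v⌋ = -1 := by
      rw [Int.floor_eq_iff]
      constructor
      · push_cast; linarith
      · push_cast; linarith
    have hfl2 : ⌊-v⌋ = 0 := Int.floor_eq_zero_iff.mpr ⟨by linarith, by linarith⟩
    have hDDneg : DD H v = -(DD H (-v)) := by
      unfold DD psiB SH
      rw [hfl, hfl2]
      rw [show ∑ h ∈ Finset.Icc 1 H, Real.sin (2*Real.pi*h*(-v))/(Real.pi*h)
          = ∑ h ∈ Finset.Icc 1 H, -(Real.sin (2*Real.pi*h*v)/(Real.pi*h)) from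
        Finset.sum_congr rfl fun h _ => by
          rw [show 2*Real.pi*(h:ℝ)*(-v) = -(2*Real.pi*h*v) by ring, Real.sin_neg]; ring]
      rw [Finset.sum_neg_distrib]
      push_cast
      ring
    have hker : kernel H v = min 1 (1/((H:ℝ)*(-v))) := by
      unfold kernel
      rw [hnear, abs_of_neg hneg, if_neg (by linarith)]
    rw [hDDneg, abs_neg, hker]
    exact posCase H hH (by linarith) (by linarith)
  · rw [hzero]
    have h1 : DD H 0 = -(1/2) := by
      unfold DD psiB SH
      have hz : ∀ h ∈ Finset.Icc 1 H, Real.sin (2*Real.pi*h*(0:ℝ))/(Real.pi*h) = 0 := by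
        intro h _
        norm_num
      rw [Finset.sum_congr rfl hz, Finset.sum_const_zero]
      norm_num
    have h2 : kernel H 0 = 1 := by
      unfold kernel nearInt
      norm_num
    rw [h1, h2, abs_neg, abs_of_nonneg (by norm_num : (0:ℝ) ≤ 1/2)]
    norm_num
  · have hker : kernel H v = min 1 (1/((H:ℝ)*v)) := by
      unfold kernel
      rw [hnear, abs_of_pos hpos, if_neg (by linarith)]
    rw [hker]
    exact posCase H hH hpos (by linarith)

lemma eC_eq (t : ℝ) :
    eC t = (Real.cos (2 * Real.pi * t) : ℂ) + (Real.sin (2 * Real.pi * t) : ℝ) * Complex.I := by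
  unfold eC
  rw [show 2 * (Real.pi : ℂ) * Complex.I * t = ((2 * Real.pi * t : ℝ) : ℂ) * Complex.I by
    push_cast; ring, Complex.exp_mul_I]
  rw [Complex.ofReal_cos, Complex.ofReal_sin]

lemma icc_erase (H : ℕ) : (Finset.Icc (-(H : ℤ)) (H : ℤ)).erase 0
    = ((Finset.Icc 1 H).image (fun h : ℕ => (h : ℤ)))
      ∪ ((Finset.Icc 1 H).image (fun h : ℕ => -(h : ℤ))) := by
  ext a
  simp only [Finset.mem_erase, Finset.mem_Icc, Finset.mem_union, Finset.mem_image]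
  constructor
  · rintro ⟨ha0, ha1, ha2⟩
    rcases lt_or_gt_of_ne ha0 with h | h
    · exact Or.inr ⟨(-a).toNat, by omega, by omega⟩
    · exact Or.inl ⟨a.toNat, by omega, by omega⟩
  · rintro (⟨b, hb, rfl⟩ | ⟨b, hb, rfl⟩) <;> exact ⟨by omega, by omega, by omega⟩

lemma T_pair (H : ℕ) (u : ℝ) :
    ∑ h ∈ (Finset.Icc (-(H : ℤ)) (H : ℤ)).erase 0,
      eC ((h : ℝ) * u) / (2 * Real.pi * Complex.I * h) = ((SH H u : ℝ) : ℂ) := by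
  rw [icc_erase, Finset.sum_union, Finset.sum_image, Finset.sum_image]
  · unfold SH
    rw [← Finset.sum_add_distrib]
    push_cast
    refine Finset.sum_congr rfl fun h hh => ?_
    have hh1 : 1 ≤ h := (Finset.mem_Icc.mp hh).1
    have hhR : (h : ℝ) ≠ 0 := by positivity
    have hhC : (h : ℂ) ≠ 0 := by exact_mod_cast hhR
    have hpi : (Real.pi : ℂ) ≠ 0 := by exact_mod_cast Real.pi_ne_zero
    rw [show (-(h:ℝ)) * u = -((h:ℝ) * u) by ring, eC_eq, eC_eq]
    rw [show 2 * Real.pi * -((h:ℝ) * u) = -(2 * Real.pi * ((h:ℝ) * u)) by ring,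
      Real.cos_neg, Real.sin_neg]
    have harg : 2 * Real.pi * ((h:ℝ) * u) = 2 * Real.pi * (h:ℝ) * u := by ring
    rw [harg]
    push_cast
    field_simp
    ring_nf
  · intro a _ b _ hab
    simp only [neg_inj, Nat.cast_inj] at hab
    omega
  · intro a _ b _ hab
    simp only [neg_inj, Nat.cast_inj] at hab
    omega
  · rw [Finset.disjoint_left]
    rintro a ha hb
    simp only [Finset.mem_image, Finset.mem_Icc] at ha hb
    obtain ⟨b1, hb1, rfl⟩ := ha
    obtain ⟨b2, hb2, hb2'⟩ := hb
    omega

theorem stmt2 : ∃ C > 0, ∀ (F : ℕ → ℂ) (x y : ℝ) (N H : ℕ),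
    Real.exp (Real.exp 1) < y → y ≤ x → y < (N : ℝ) → (N : ℝ) ≤ x → 1 ≤ H →
    ‖(∑ n ∈ Finset.Ioc N (2 * N), dconv F muC n *
          ((psiB ((x + y) / n) - psiB (x / n) : ℝ) : ℂ)) -
        (-(∫ t in x..(x + y), ∑ h ∈ (Finset.Icc (-(H : ℤ)) (H : ℤ)).erase 0,
            ∑ n ∈ Finset.Ioc N (2 * N), dconv F muC n / (n : ℂ) * eC ((h : ℝ) * t / n)))‖ ≤
      C * sSup {S : ℝ | ∃ z : ℝ, x ≤ z ∧ z ≤ x + y ∧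
        S = ∑ n ∈ Finset.Ioc N (2 * N), ‖dconv F muC n‖ * kernel H (z / n)} := by
  refine ⟨6, by norm_num, ?_⟩
  intro F x y N H hy hyx hyN hNx hH
  have hy0 : (0:ℝ) < y := lt_trans (Real.exp_pos _) hy
  have hN0 : (0:ℝ) < N := lt_trans hy0 hyN
  set s := Finset.Ioc N (2 * N) with hs
  set f : ℕ → ℂ := dconv F muC with hf
  set E := (Finset.Icc (-(H : ℤ)) (H : ℤ)).erase 0 with hE
  have hn0 : ∀ n ∈ s, (n : ℝ) ≠ 0 := by
    intro n hn
    have h1 := (Finset.mem_Ioc.mp hn).1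
    have h2 : 0 < n := lt_of_le_of_lt (Nat.zero_le N) h1
    positivity
  have hh0 : ∀ h : ℤ, h ∈ E → (h : ℂ) ≠ 0 := by
    intro h hhE
    have := Finset.ne_of_mem_erase hhE
    exact_mod_cast this
  have hpi : (Real.pi : ℂ) ≠ 0 := by exact_mod_cast Real.pi_ne_zero
  have hcont : ∀ (h : ℤ) (n : ℕ), Continuous fun t : ℝ => f n / n * eC ((h:ℝ) * t / n) := by
    intro h n
    unfold eC
    fun_prop
  have hI : (∫ t in x..(x + y), ∑ h ∈ E, ∑ n ∈ s, f n / n * eC ((h:ℝ) * t / n))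
      = ∑ n ∈ s, f n * ((∑ h ∈ E, eC ((h:ℝ) * ((x+y)/n)) / (2 * Real.pi * Complex.I * h))
          - ∑ h ∈ E, eC ((h:ℝ) * (x/n)) / (2 * Real.pi * Complex.I * h)) := by
    rw [intervalIntegral.integral_finset_sum (fun h _ => (continuous_finset_sum _
      (fun n _ => (hcont h n))).intervalIntegrable _ _)]
    have step : ∀ h ∈ E, (∫ t in x..(x+y), ∑ n ∈ s, f n / n * eC ((h:ℝ) * t / n))
        = ∑ n ∈ s, (f n * (eC ((h:ℝ) * ((x+y)/n)) / (2 * Real.pi * Complex.I * h))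
            - f n * (eC ((h:ℝ) * (x/n)) / (2 * Real.pi * Complex.I * h))) := by
      intro h hhE
      rw [intervalIntegral.integral_finset_sum (fun n _ => ((hcont h n).intervalIntegrable _ _))]
      refine Finset.sum_congr rfl fun n hn => ?_
      have hn' := hn0 n hn
      have hnC : (n:ℂ) ≠ 0 := by exact_mod_cast hn'
      have hhC := hh0 h hhE
      have hden : (2 * (Real.pi:ℂ) * Complex.I * h : ℂ) ≠ 0 :=
        mul_ne_zero (mul_ne_zero (mul_ne_zero two_ne_zero hpi) Complex.I_ne_zero) hhC
      have hc : (2 * (Real.pi:ℂ) * Complex.I * h / n : ℂ) ≠ 0 := div_ne_zero hden hnC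
      have heq : ∀ t : ℝ, eC ((h:ℝ) * t / n) = Complex.exp ((2 * (Real.pi:ℂ) * Complex.I * h / n) * t) := by
        intro t; unfold eC; congr 1; push_cast; ring
      rw [intervalIntegral.integral_const_mul]
      simp_rw [heq]
      rw [integral_exp_mul_complex hc]
      have e1 : Complex.exp ((2 * (Real.pi:ℂ) * Complex.I * h / n) * ((x+y):ℝ))
          = eC ((h:ℝ) * ((x+y)/n)) := by unfold eC; congr 1; push_cast; ring
      have e2 : Complex.exp ((2 * (Real.pi:ℂ) * Complex.I * h / n) * (x:ℝ))
          = eC ((h:ℝ) * (x/n)) := by unfold eC; congr 1; push_cast; ring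
      rw [e1, e2]
      field_simp
    rw [Finset.sum_congr rfl step, Finset.sum_comm]
    refine Finset.sum_congr rfl fun n hn => ?_
    rw [Finset.sum_sub_distrib, mul_sub, Finset.mul_sum, Finset.mul_sum]
  rw [hI]
  have key : (∑ n ∈ s, f n * ((psiB ((x + y) / n) - psiB (x / n) : ℝ) : ℂ)) -
      (-(∑ n ∈ s, f n * ((∑ h ∈ E, eC ((h:ℝ) * ((x+y)/n)) / (2 * Real.pi * Complex.I * h))
          - ∑ h ∈ E, eC ((h:ℝ) * (x/n)) / (2 * Real.pi * Complex.I * h))))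
      = ∑ n ∈ s, f n * (((DD H ((x+y)/n) : ℝ) : ℂ) - ((DD H (x/n) : ℝ) : ℂ)) := by
    rw [sub_neg_eq_add, ← Finset.sum_add_distrib]
    refine Finset.sum_congr rfl fun n hn => ?_
    rw [T_pair H ((x+y)/n), T_pair H (x/n)]
    unfold DD
    push_cast
    ring
  rw [key]
  set Sset := {S : ℝ | ∃ z : ℝ, x ≤ z ∧ z ≤ x + y ∧
      S = ∑ n ∈ s, ‖f n‖ * kernel H (z / n)} with hSset
  have hbdd : BddAbove Sset := by
    refine ⟨∑ n ∈ s, ‖f n‖, ?_⟩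
    rintro S ⟨z, _, _, rfl⟩
    refine Finset.sum_le_sum fun n hn => ?_
    calc ‖f n‖ * kernel H (z/n) ≤ ‖f n‖ * 1 :=
          mul_le_mul_of_nonneg_left (kernel_le_one _ _) (norm_nonneg _)
      _ = ‖f n‖ := mul_one _
  have hmem1 : (∑ n ∈ s, ‖f n‖ * kernel H (x/n)) ∈ Sset :=
    ⟨x, le_refl x, by linarith, rfl⟩
  have hmem2 : (∑ n ∈ s, ‖f n‖ * kernel H ((x+y)/n)) ∈ Sset :=
    ⟨x+y, by linarith, le_refl _, rfl⟩
  calc ‖∑ n ∈ s, f n * (((DD H ((x+y)/n) : ℝ) : ℂ) - ((DD H (x/n) : ℝ) : ℂ))‖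
      ≤ ∑ n ∈ s, ‖f n * (((DD H ((x+y)/n) : ℝ) : ℂ) - ((DD H (x/n) : ℝ) : ℂ))‖ :=
        norm_sum_le _ _
    _ ≤ ∑ n ∈ s, ‖f n‖ * (3 * kernel H ((x+y)/n) + 3 * kernel H (x/n)) := by
        refine Finset.sum_le_sum fun n hn => ?_
        rw [norm_mul]
        refine mul_le_mul_of_nonneg_left ?_ (norm_nonneg _)
        calc ‖(((DD H ((x+y)/n) : ℝ) : ℂ) - ((DD H (x/n) : ℝ) : ℂ))‖
            ≤ ‖((DD H ((x+y)/n) : ℝ) : ℂ)‖ + ‖((DD H (x/n) : ℝ) : ℂ)‖ := norm_sub_le _ _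
          _ ≤ 3 * kernel H ((x+y)/n) + 3 * kernel H (x/n) := by
              rw [Complex.norm_real, Complex.norm_real, Real.norm_eq_abs, Real.norm_eq_abs]
              exact add_le_add (core H hH _) (core H hH _)
    _ = 3 * (∑ n ∈ s, ‖f n‖ * kernel H ((x+y)/n)) + 3 * (∑ n ∈ s, ‖f n‖ * kernel H (x/n)) := by
        rw [Finset.mul_sum, Finset.mul_sum, ← Finset.sum_add_distrib]
        refine Finset.sum_congr rfl fun n hn => ?_
        ring
    _ ≤ 3 * sSup Sset + 3 * sSup Sset :=
        add_le_add (mul_le_mul_of_nonneg_left (le_csSup hbdd hmem2) (by norm_num))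
          (mul_le_mul_of_nonneg_left (le_csSup hbdd hmem1) (by norm_num))
    _ = 6 * sSup Sset := by ring
end

section
/- (Dirichlet hyperbola principle in short intervals.) Let x, y, T be real numbers with 1 ≤ max(y, x/y) ≤ T ≤ x. Then for any arithmetic functions f and g, ∑_{x < n ≤ x+y} (f ⋆ g)(n) = ∑_{d ≤ T} f(d)·∑_{x/d < k ≤ (x+y)/d} g(k) + ∑_{k ≤ x/T} g(k)·∑_{x/k < d ≤ (x+y)/k} f(d) + O( max_{k ≤ 2x/T} |g(k)| · ∑_{T < d ≤ T(1 + y/x)} |f(d)| ), with an absolute implied constant. -/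
open Finset

theorem stmt3 : ∃ C > 0, ∀ (f g : ℕ → ℂ) (x y T : ℝ),
    1 ≤ max y (x / y) → max y (x / y) ≤ T → T ≤ x →
    ‖(∑ n ∈ Finset.Ioc ⌊x⌋₊ ⌊x + y⌋₊, dconv f g n) -
        (∑ d ∈ Finset.Icc 1 ⌊T⌋₊, f d * ∑ k ∈ Finset.Ioc ⌊x / d⌋₊ ⌊(x + y) / d⌋₊, g k) -
        (∑ k ∈ Finset.Icc 1 ⌊x / T⌋₊, g k * ∑ d ∈ Finset.Ioc ⌊x / k⌋₊ ⌊(x + y) / k⌋₊, f d)‖ ≤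
      C * sSup {M : ℝ | ∃ k ∈ Finset.Icc 1 ⌊2 * x / T⌋₊, M = ‖g k‖} *
        ∑ d ∈ Finset.Ioc ⌊T⌋₊ ⌊T * (1 + y / x)⌋₊, ‖f d‖ := by
  classical
  refine ⟨1, one_pos, fun f g x y T h1 h2 h3 => ?_⟩
  have hT1 : (1:ℝ) ≤ T := h1.trans h2
  have hT0 : (0:ℝ) < T := by linarith
  have hx1 : (1:ℝ) ≤ x := hT1.trans h3
  have hx0 : (0:ℝ) < x := by linarith
  have hy0 : (0:ℝ) < y := by
    by_contra h
    push_neg at h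
    have h4 : x / y ≤ 0 := div_nonpos_of_nonneg_of_nonpos hx0.le h
    have h5 : max y (x / y) ≤ 0 := max_le h h4
    linarith
  have hyT : y ≤ T := (le_max_left _ _).trans h2
  have hxy0 : (0:ℝ) ≤ x + y := by linarith
  set N := ⌊x + y⌋₊ with hN
  -- the set of pairs
  set P : Finset (ℕ × ℕ) := (Finset.Icc 1 N ×ˢ Finset.Icc 1 N).filter
    (fun p => x < (p.1 : ℝ) * p.2 ∧ (p.1 : ℝ) * p.2 ≤ x + y) with hP
  have hmemP : ∀ p : ℕ × ℕ, p ∈ P ↔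
      (1 ≤ p.1 ∧ p.1 ≤ N) ∧ (1 ≤ p.2 ∧ p.2 ≤ N) ∧
        x < (p.1 : ℝ) * p.2 ∧ (p.1 : ℝ) * p.2 ≤ x + y := by
    intro p
    simp only [hP, Finset.mem_filter, Finset.mem_product, Finset.mem_Icc]
    tauto
  -- Step A : the convolution sum equals the sum over P
  have hstepA : (∑ n ∈ Finset.Ioc ⌊x⌋₊ ⌊x + y⌋₊, dconv f g n)
      = ∑ p ∈ P, f p.1 * g p.2 := by
    have h4 : ∀ n : ℕ, dconv f g n = ∑ p ∈ n.divisorsAntidiagonal, f p.1 * g p.2 := by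
      intro n
      rw [dconv, ← Nat.sum_divisorsAntidiagonal (fun a b => f a * g b)]
    simp_rw [h4]
    rw [← Finset.sum_biUnion]
    · apply Finset.sum_congr _ (fun _ _ => rfl)
      ext p
      simp only [Finset.mem_biUnion, Finset.mem_Ioc, Nat.mem_divisorsAntidiagonal]
      rw [hmemP]
      constructor
      · rintro ⟨n, ⟨hn1, hn2⟩, hpn, hn0⟩
        subst hpn
        obtain ⟨h01, h02⟩ := Nat.mul_ne_zero_iff.1 hn0
        have hp1 : 1 ≤ p.1 := Nat.one_le_iff_ne_zero.2 h01
        have hp2 : 1 ≤ p.2 := Nat.one_le_iff_ne_zero.2 h02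
        have hxlt : x < ((p.1 * p.2 : ℕ) : ℝ) := (Nat.floor_lt hx0.le).1 hn1
        have hle : ((p.1 * p.2 : ℕ) : ℝ) ≤ x + y := (Nat.le_floor_iff hxy0).1 hn2
        push_cast at hxlt hle
        refine ⟨⟨hp1, ?_⟩, ⟨hp2, ?_⟩, hxlt, hle⟩
        · exact le_trans (Nat.le_mul_of_pos_right _ hp2) hn2
        · exact le_trans (Nat.le_mul_of_pos_left _ hp1) hn2
      · rintro ⟨⟨hp1, _⟩, ⟨hp2, _⟩, hxlt, hle⟩
        refine ⟨p.1 * p.2, ⟨?_, ?_⟩, rfl, by positivity⟩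
        · rw [Nat.floor_lt hx0.le]; push_cast; exact hxlt
        · rw [Nat.le_floor_iff hxy0]; push_cast; exact hle
    · intro m _ n _ hmn
      simp only [Function.onFun]
      rw [Finset.disjoint_left]
      intro p hpm hpn
      exact hmn ((Nat.mem_divisorsAntidiagonal.1 hpm).1.symm.trans
        (Nat.mem_divisorsAntidiagonal.1 hpn).1)
  -- Step B : the first main term
  have hstepB : (∑ d ∈ Finset.Icc 1 ⌊T⌋₊, f d * ∑ k ∈ Finset.Ioc ⌊x / d⌋₊ ⌊(x + y) / d⌋₊, g k)
      = ∑ p ∈ P.filter (fun p => (p.1 : ℝ) ≤ T), f p.1 * g p.2 := by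
    rw [Finset.sum_finset_product' _ (Finset.Icc 1 ⌊T⌋₊)
      (fun d => Finset.Ioc ⌊x / d⌋₊ ⌊(x + y) / d⌋₊) ?_ (f := fun a b => f a * g b)]
    · exact Finset.sum_congr rfl fun d _ => Finset.mul_sum _ _ _
    · intro p
      rw [Finset.mem_filter, hmemP, Finset.mem_Icc, Finset.mem_Ioc]
      constructor
      · rintro ⟨⟨⟨hp1, _⟩, ⟨hp2, _⟩, hxlt, hle⟩, hpT⟩
        have hp1pos : (0:ℝ) < (p.1 : ℝ) := by exact_mod_cast hp1
        refine ⟨⟨hp1, Nat.le_floor hpT⟩, ?_, ?_⟩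
        · rw [Nat.floor_lt (by positivity), div_lt_iff₀ hp1pos, mul_comm]
          exact hxlt
        · rw [Nat.le_floor_iff (by positivity), le_div_iff₀ hp1pos, mul_comm]
          exact hle
      · rintro ⟨⟨hp1, hpT⟩, hk1, hk2⟩
        have hp1pos : (0:ℝ) < (p.1 : ℝ) := by exact_mod_cast hp1
        have hpT' : (p.1 : ℝ) ≤ T := by
          have := (Nat.le_floor_iff hT0.le).1 hpT; exact this
        have hxlt : x < (p.1 : ℝ) * p.2 := by
          have h5 := (Nat.floor_lt (by positivity)).1 hk1
          rw [div_lt_iff₀ hp1pos, mul_comm] at h5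
          exact h5
        have hle : (p.1 : ℝ) * p.2 ≤ x + y := by
          have h5 := (Nat.le_floor_iff (by positivity)).1 hk2
          rw [le_div_iff₀ hp1pos, mul_comm] at h5
          exact h5
        have hp2 : 1 ≤ p.2 := by omega
        have hp1r : (1:ℝ) ≤ (p.1 : ℝ) := by exact_mod_cast hp1
        refine ⟨⟨⟨hp1, ?_⟩, ⟨hp2, ?_⟩, hxlt, hle⟩, hpT'⟩
        · rw [Nat.le_floor_iff hxy0]; linarith
        · rw [Nat.le_floor_iff hxy0]
          have h5 : (p.2 : ℝ) ≤ (p.1 : ℝ) * p.2 :=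
            le_mul_of_one_le_left (by positivity) hp1r
          linarith
  -- Step C : the second main term
  have hstepC : (∑ k ∈ Finset.Icc 1 ⌊x / T⌋₊, g k * ∑ d ∈ Finset.Ioc ⌊x / k⌋₊ ⌊(x + y) / k⌋₊, f d)
      = ∑ p ∈ P.filter (fun p => (p.2 : ℝ) ≤ x / T), f p.1 * g p.2 := by
    rw [Finset.sum_finset_product_right' _ (Finset.Icc 1 ⌊x / T⌋₊)
      (fun k => Finset.Ioc ⌊x / k⌋₊ ⌊(x + y) / k⌋₊) ?_ (f := fun a b => f a * g b)]
    · refine Finset.sum_congr rfl fun k _ => ?_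
      rw [Finset.mul_sum]
      exact Finset.sum_congr rfl fun d _ => mul_comm _ _
    · intro p
      rw [Finset.mem_filter, hmemP, Finset.mem_Icc, Finset.mem_Ioc]
      constructor
      · rintro ⟨⟨⟨hp1, _⟩, ⟨hp2, _⟩, hxlt, hle⟩, hpT⟩
        have hp2pos : (0:ℝ) < (p.2 : ℝ) := by exact_mod_cast hp2
        refine ⟨⟨hp2, Nat.le_floor hpT⟩, ?_, ?_⟩
        · rw [Nat.floor_lt (by positivity), div_lt_iff₀ hp2pos]
          exact hxlt
        · rw [Nat.le_floor_iff (by positivity), le_div_iff₀ hp2pos]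
          exact hle
      · rintro ⟨⟨hp2, hpT⟩, hk1, hk2⟩
        have hp2pos : (0:ℝ) < (p.2 : ℝ) := by exact_mod_cast hp2
        have hpT' : (p.2 : ℝ) ≤ x / T := by
          have := (Nat.le_floor_iff (by positivity)).1 hpT; exact this
        have hxlt : x < (p.1 : ℝ) * p.2 := by
          have h5 := (Nat.floor_lt (by positivity)).1 hk1
          rw [div_lt_iff₀ hp2pos] at h5
          exact h5
        have hle : (p.1 : ℝ) * p.2 ≤ x + y := by
          have h5 := (Nat.le_floor_iff (by positivity)).1 hk2
          rw [le_div_iff₀ hp2pos] at h5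
          exact h5
        have hp1 : 1 ≤ p.1 := by omega
        have hp2r : (1:ℝ) ≤ (p.2 : ℝ) := by exact_mod_cast hp2
        refine ⟨⟨⟨hp1, ?_⟩, ⟨hp2, ?_⟩, hxlt, hle⟩, hpT'⟩
        · rw [Nat.le_floor_iff hxy0]
          have h5 : (p.1 : ℝ) ≤ (p.1 : ℝ) * p.2 :=
            le_mul_of_one_le_right (by positivity) hp2r
          linarith
        · rw [Nat.le_floor_iff hxy0]
          have hxT : x / T ≤ x := div_le_self hx0.le hT1
          linarith
  -- the two filters are incompatible on P
  have hincomp : ∀ p ∈ P, (p.2 : ℝ) ≤ x / T → ¬((p.1 : ℝ) ≤ T) := by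
    intro p hp h4 h5
    rw [hmemP] at hp
    obtain ⟨⟨hp1, _⟩, ⟨hp2, _⟩, hxlt, hle⟩ := hp
    have hp2nn : (0:ℝ) ≤ (p.2 : ℝ) := by positivity
    have h6 : (p.1 : ℝ) * p.2 ≤ T * (x / T) := mul_le_mul h5 h4 hp2nn hT0.le
    have h7 : T * (x / T) = x := by field_simp
    linarith
  -- the remainder set
  set R : Finset (ℕ × ℕ) := P.filter
    (fun p => ¬((p.1 : ℝ) ≤ T) ∧ ¬((p.2 : ℝ) ≤ x / T)) with hR
  -- splitting identity
  have hsplit : (∑ p ∈ P, f p.1 * g p.2)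
      - (∑ p ∈ P.filter (fun p => (p.1 : ℝ) ≤ T), f p.1 * g p.2)
      - (∑ p ∈ P.filter (fun p => (p.2 : ℝ) ≤ x / T), f p.1 * g p.2)
      = ∑ p ∈ R, f p.1 * g p.2 := by
    have e1 := Finset.sum_filter_add_sum_filter_not P (fun p => (p.1 : ℝ) ≤ T)
      (fun p => f p.1 * g p.2)
    have e2 := Finset.sum_filter_add_sum_filter_not
      (P.filter (fun p => ¬((p.1 : ℝ) ≤ T))) (fun p => (p.2 : ℝ) ≤ x / T)
      (fun p => f p.1 * g p.2)
    have e3 : (P.filter (fun p => ¬((p.1 : ℝ) ≤ T))).filter (fun p => (p.2 : ℝ) ≤ x / T)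
        = P.filter (fun p => (p.2 : ℝ) ≤ x / T) := by
      rw [Finset.filter_filter]
      apply Finset.filter_congr
      intro p hp
      simp only [and_iff_right_iff_imp]
      exact fun h4 => hincomp p hp h4
    have e4 : (P.filter (fun p => ¬((p.1 : ℝ) ≤ T))).filter (fun p => ¬((p.2 : ℝ) ≤ x / T))
        = R := by rw [hR, Finset.filter_filter]
    rw [e3, e4] at e2
    linear_combination -e1 - e2
  -- facts about elements of R
  have hmemR : ∀ p ∈ R, (1 ≤ p.1 ∧ 1 ≤ p.2 ∧ x < (p.1:ℝ) * p.2 ∧ (p.1:ℝ) * p.2 ≤ x + y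
      ∧ T < (p.1:ℝ) ∧ x / T < (p.2:ℝ)) := by
    intro p hp
    rw [hR, Finset.mem_filter] at hp
    obtain ⟨hpP, h4, h5⟩ := hp
    push_neg at h4 h5
    rw [hmemP] at hpP
    exact ⟨hpP.1.1, hpP.2.1.1, hpP.2.2.1, hpP.2.2.2, h4, h5⟩
  -- the sup
  set S : Set ℝ := {M : ℝ | ∃ k ∈ Finset.Icc 1 ⌊2 * x / T⌋₊, M = ‖g k‖} with hS
  have hSeq : S = ↑((Finset.Icc 1 ⌊2 * x / T⌋₊).image (fun k => ‖g k‖)) := by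
    ext M
    simp only [hS, Set.mem_setOf_eq, Finset.coe_image, Set.mem_image, Finset.mem_coe]
    constructor
    · rintro ⟨k, hk, rfl⟩; exact ⟨k, hk, rfl⟩
    · rintro ⟨k, hk, rfl⟩; exact ⟨k, hk, rfl⟩
  have hbdd : BddAbove S := by rw [hSeq]; exact Finset.bddAbove _
  have h1mem : 1 ≤ ⌊2 * x / T⌋₊ := by
    rw [Nat.le_floor_iff (by positivity)]
    rw [Nat.cast_one, le_div_iff₀ hT0]
    linarith
  have hG0 : 0 ≤ sSup S := by
    refine le_trans (norm_nonneg (g 1)) (le_csSup hbdd ?_)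
    exact ⟨1, Finset.mem_Icc.2 ⟨le_refl 1, h1mem⟩, rfl⟩
  have hGk : ∀ p ∈ R, ‖g p.2‖ ≤ sSup S := by
    intro p hp
    obtain ⟨hp1, hp2, hxlt, hle, hTp, hxTp⟩ := hmemR p hp
    refine le_csSup hbdd ⟨p.2, Finset.mem_Icc.2 ⟨hp2, ?_⟩, rfl⟩
    rw [Nat.le_floor_iff (by positivity), le_div_iff₀ hT0]
    have hp2nn : (0:ℝ) ≤ (p.2 : ℝ) := by positivity
    have h5 : (p.2 : ℝ) * T ≤ (p.2 : ℝ) * p.1 :=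
      mul_le_mul_of_nonneg_left hTp.le hp2nn
    have h6 : (p.2 : ℝ) * p.1 = (p.1 : ℝ) * p.2 := mul_comm _ _
    linarith
  -- injectivity of first projection on R
  have key : ∀ a b c : ℝ, T < a → x < a * b → a * c ≤ x + y → b + 1 ≤ c → False := by
    intro a b c hTa hab hac hbc
    have ha0 : 0 ≤ a := by linarith
    have h10 : a * (b + 1) ≤ a * c := mul_le_mul_of_nonneg_left hbc ha0
    have h11 : a * (b + 1) = a * b + a := by ring
    linarith
  have hinj : ∀ p ∈ R, ∀ q ∈ R, p.1 = q.1 → p = q := by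
    intro p hp q hq h4
    obtain ⟨hp1, hp2, hpxlt, hple, hpT, _⟩ := hmemR p hp
    obtain ⟨hq1, hq2, hqxlt, hqle, hqT, _⟩ := hmemR q hq
    rw [show q.1 = p.1 from h4.symm] at hqxlt hqle
    have h5 : p.2 = q.2 := by
      by_contra h6
      rcases Nat.lt_or_ge p.2 q.2 with h7 | h7
      · have h8 : (p.2 : ℝ) + 1 ≤ (q.2 : ℝ) := by exact_mod_cast h7
        exact key (p.1 : ℝ) (p.2 : ℝ) (q.2 : ℝ) hpT hpxlt hqle h8
      · have h7' : q.2 < p.2 := by omega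
        have h8 : (q.2 : ℝ) + 1 ≤ (p.2 : ℝ) := by exact_mod_cast h7'
        exact key (p.1 : ℝ) (q.2 : ℝ) (p.2 : ℝ) hpT hqxlt hple h8
    exact Prod.ext h4 h5
  -- image of R under first projection lies in the Ioc
  have hsub : R.image Prod.fst ⊆ Finset.Ioc ⌊T⌋₊ ⌊T * (1 + y / x)⌋₊ := by
    intro d hd
    rw [Finset.mem_image] at hd
    obtain ⟨p, hp, rfl⟩ := hd
    obtain ⟨hp1, hp2, hxlt, hle, hTp, hxTp⟩ := hmemR p hp
    rw [Finset.mem_Ioc]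
    constructor
    · rw [Nat.floor_lt hT0.le]; exact hTp
    · rw [Nat.le_floor_iff (by positivity)]
      have hp1nn : (0:ℝ) ≤ (p.1 : ℝ) := by positivity
      have h5 : (p.1 : ℝ) * (x / T) ≤ x + y :=
        le_trans (mul_le_mul_of_nonneg_left hxTp.le hp1nn) hle
      have h6 : (p.1 : ℝ) * x ≤ (x + y) * T := by
        have h7 := mul_le_mul_of_nonneg_right h5 hT0.le
        rwa [mul_assoc, div_mul_cancel₀ x hT0.ne'] at h7
      have h8 : T * (1 + y / x) = (x + y) * T / x := by field_simp
      rw [h8, le_div_iff₀ hx0]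
      linarith
  -- final chain
  rw [hstepA, hstepB, hstepC, hsplit, one_mul]
  calc ‖∑ p ∈ R, f p.1 * g p.2‖ ≤ ∑ p ∈ R, ‖f p.1 * g p.2‖ := norm_sum_le _ _
    _ = ∑ p ∈ R, ‖f p.1‖ * ‖g p.2‖ := by simp [norm_mul]
    _ ≤ ∑ p ∈ R, ‖f p.1‖ * sSup S := by
        refine Finset.sum_le_sum fun p hp => ?_
        exact mul_le_mul_of_nonneg_left (hGk p hp) (norm_nonneg _)
    _ = (∑ p ∈ R, ‖f p.1‖) * sSup S := by rw [Finset.sum_mul]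
    _ = (∑ d ∈ R.image Prod.fst, ‖f d‖) * sSup S := by
        rw [Finset.sum_image hinj]
    _ ≤ (∑ d ∈ Finset.Ioc ⌊T⌋₊ ⌊T * (1 + y / x)⌋₊, ‖f d‖) * sSup S := by
        refine mul_le_mul_of_nonneg_right ?_ hG0
        exact Finset.sum_le_sum_of_subset_of_nonneg hsub fun _ _ _ => norm_nonneg _
    _ = sSup S * ∑ d ∈ Finset.Ioc ⌊T⌋₊ ⌊T * (1 + y / x)⌋₊, ‖f d‖ := mul_comm _ _
end

section
/- For all integers r ≥ 1, n ≥ 1 and N ≥ 1, ∑_{d | n, N < d ≤ 2N} τ_r(d) ≤ (log 2eN)^{r−1} · Δ_{r+1}(n). -/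
open Finset

/-- The `m`-th Dirichlet–Piltz divisor function: the number of ways of writing `n`
as an ordered product of `m` positive integers. -/
noncomputable def tauP (m n : ℕ) : ℕ :=
  Nat.card {l : Fin m → ℕ // ∏ i, l i = n}

/-- The number of `(r−1)`-tuples `(d_1, …, d_{r−1})` with `d_1 ⋯ d_{r−1} ∣ n` and
`e^{u_i} < d_i ≤ e^{u_i + 1}` for each `i`. -/
noncomputable def hooleyCount (r : ℕ) (u : Fin (r - 1) → ℝ) (n : ℕ) : ℕ :=
  Nat.card {d : Fin (r - 1) → ℕ // (∏ i, d i) ∣ n ∧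
    ∀ i, Real.exp (u i) < (d i : ℝ) ∧ (d i : ℝ) ≤ Real.exp (u i + 1)}

/-- Hooley's divisor function `Δ_r(n)`. -/
noncomputable def hooleyDelta (r : ℕ) (n : ℕ) : ℕ :=
  sSup {k : ℕ | ∃ u : Fin (r - 1) → ℝ, k = hooleyCount r u n}

namespace Stmt6Aux

open scoped Classical

/-- Finset version of the Hooley tuple set. -/
noncomputable def hbox (m : ℕ) (u : Fin m → ℝ) (n : ℕ) : Finset (Fin m → ℕ) :=
  (Fintype.piFinset fun _ : Fin m => Finset.range (n + 1)).filter
    (fun d => (∏ i, d i) ∣ n ∧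
      ∀ i, Real.exp (u i) < (d i : ℝ) ∧ (d i : ℝ) ≤ Real.exp (u i + 1))

/-- Finset of ordered factorizations of `d` into `m` factors. -/
noncomputable def perD (m d : ℕ) : Finset (Fin m → ℕ) :=
  (Fintype.piFinset fun _ : Fin m => Finset.range (d + 1)).filter
    (fun l => ∏ i, l i = d)

lemma natCard_subtype_eq {α : Type*} (p : α → Prop) [DecidablePred p] (t : Finset α)
    (h : ∀ x, p x → x ∈ t) :
    Nat.card {x // p x} = (t.filter p).card := by
  have e : {x // p x} ≃ {x // x ∈ t.filter p} := by
    apply Equiv.subtypeEquivRight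
    intro x
    simp only [Finset.mem_filter]
    exact ⟨fun hp => ⟨h x hp, hp⟩, fun hx => hx.2⟩
  rw [Nat.card_congr e]
  exact Nat.card_eq_finsetCard _

lemma tauP_eq_perD (m d : ℕ) (hd : 0 < d) : tauP m d = (perD m d).card := by
  unfold tauP perD
  apply natCard_subtype_eq
  intro l hl
  rw [Fintype.mem_piFinset]
  intro i
  rw [Finset.mem_range, Nat.lt_succ_iff]
  exact Nat.le_of_dvd hd (hl ▸ Finset.dvd_prod_of_mem l (Finset.mem_univ i))

lemma hooleyCount_eq_hbox (m : ℕ) (u : Fin m → ℝ) (n : ℕ) (hn : 0 < n) :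
    hooleyCount (m + 1) u n = (hbox m u n).card := by
  unfold hooleyCount hbox
  show Nat.card {d : Fin m → ℕ // (∏ i, d i) ∣ n ∧
    ∀ i, Real.exp (u i) < (d i : ℝ) ∧ (d i : ℝ) ≤ Real.exp (u i + 1)} = _
  apply natCard_subtype_eq
  intro d hd
  rw [Fintype.mem_piFinset]
  intro i
  rw [Finset.mem_range, Nat.lt_succ_iff]
  exact Nat.le_of_dvd hn ((Finset.dvd_prod_of_mem d (Finset.mem_univ i)).trans hd.1)

lemma hbox_card_le (m : ℕ) (u : Fin m → ℝ) (n : ℕ) :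
    (hbox m u n).card ≤ (n + 1) ^ m := by
  calc (hbox m u n).card
      ≤ (Fintype.piFinset fun _ : Fin m => Finset.range (n + 1)).card :=
        Finset.card_filter_le _ _
    _ = (n + 1) ^ m := by
        simp [Fintype.card_piFinset, Finset.prod_const]

lemma hooleyCount_le_delta (m : ℕ) (u : Fin m → ℝ) (n : ℕ) (hn : 0 < n) :
    hooleyCount (m + 1) u n ≤ hooleyDelta (m + 1) n := by
  apply le_csSup
  · refine ⟨(n + 1) ^ m, ?_⟩
    rintro k ⟨v, rfl⟩
    rw [hooleyCount_eq_hbox m v n hn]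
    exact hbox_card_le _ _ _
  · exact ⟨u, rfl⟩

/-- The largest integer strictly below `e^(j+1)`. -/
noncomputable def Mv (j : ℕ) : ℕ := ⌈Real.exp ((j : ℝ) + 1)⌉₊ - 1

lemma boxA (m : ℕ) (hm : 1 ≤ m) :
    Real.exp (Real.log (Mv ⌊Real.log m⌋₊) - 1) < (m : ℝ) ∧
      (m : ℝ) ≤ Real.exp (Real.log (Mv ⌊Real.log m⌋₊) - 1 + 1) := by
  set j : ℕ := ⌊Real.log m⌋₊ with hj
  set x : ℝ := Real.exp ((j : ℝ) + 1) with hx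
  have hMvdef : Mv j = ⌈x⌉₊ - 1 := rfl
  have hm0 : (0 : ℝ) < m := by exact_mod_cast hm
  have hxpos : (0 : ℝ) < x := Real.exp_pos _
  have hceil1 : 1 ≤ ⌈x⌉₊ := Nat.ceil_pos.2 hxpos
  have hMvcast : (Mv j : ℝ) = (⌈x⌉₊ : ℝ) - 1 := by
    rw [hMvdef, Nat.cast_sub hceil1, Nat.cast_one]
  have hmx : (m : ℝ) < x := by
    have h1 : Real.log m < (j : ℝ) + 1 := Nat.lt_floor_add_one (Real.log m)
    calc (m : ℝ) = Real.exp (Real.log m) := (Real.exp_log hm0).symm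
      _ < x := Real.exp_lt_exp.2 h1
  have hmMv : m ≤ Mv j := by
    have h2 : m < ⌈x⌉₊ := Nat.lt_ceil.2 hmx
    omega
  have hMvR : (m : ℝ) ≤ (Mv j : ℝ) := by exact_mod_cast hmMv
  have hMvpos : (0 : ℝ) < (Mv j : ℝ) := lt_of_lt_of_le hm0 hMvR
  have hMvlt : (Mv j : ℝ) < x := by
    have := Nat.ceil_lt_add_one hxpos.le
    rw [hMvcast]; linarith
  constructor
  · have hexpj : Real.exp (j : ℝ) ≤ (m : ℝ) := by
      have hjle : (j : ℝ) ≤ Real.log m :=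
        Nat.floor_le (Real.log_nonneg (by exact_mod_cast hm))
      calc Real.exp (j : ℝ) ≤ Real.exp (Real.log m) := Real.exp_le_exp.2 hjle
        _ = m := Real.exp_log hm0
    have hE : Real.exp (Real.log (Mv j) - 1) = (Mv j : ℝ) / Real.exp 1 := by
      rw [Real.exp_sub, Real.exp_log hMvpos]
    rw [hE]
    have hxsplit : x = Real.exp (j : ℝ) * Real.exp 1 := by
      rw [hx, ← Real.exp_add]
    have hlt : (Mv j : ℝ) / Real.exp 1 < Real.exp (j : ℝ) := by
      rw [div_lt_iff₀ (Real.exp_pos 1)]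
      calc (Mv j : ℝ) < x := hMvlt
        _ = Real.exp (j : ℝ) * Real.exp 1 := hxsplit
    exact lt_of_lt_of_le hlt hexpj
  · have h : Real.log (Mv j) - 1 + 1 = Real.log (Mv j) := by ring
    rw [h, Real.exp_log hMvpos]
    exact hMvR

lemma boxB (n N d : ℕ) (hN : 1 ≤ N) (hn : 0 < n) (hdn : d ∣ n) (h1 : N < d)
    (h2 : d ≤ 2 * N) :
    Real.exp (Real.log n - Real.log N - 1) < ((n / d : ℕ) : ℝ) ∧
      ((n / d : ℕ) : ℝ) ≤ Real.exp (Real.log n - Real.log N - 1 + 1) := by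
  have hd0 : 0 < d := lt_of_le_of_lt (Nat.zero_le N) h1
  have hdR : (0 : ℝ) < d := by exact_mod_cast hd0
  have hNR : (0 : ℝ) < N := by exact_mod_cast hN
  have hnR : (0 : ℝ) < n := by exact_mod_cast hn
  have hcast : ((n / d : ℕ) : ℝ) = (n : ℝ) / (d : ℝ) := by
    rw [Nat.cast_div hdn (by positivity)]
  have he2 : (2 : ℝ) < Real.exp 1 := lt_trans (by norm_num) Real.exp_one_gt_d9
  constructor
  · have hE : Real.exp (Real.log n - Real.log N - 1)
        = (n : ℝ) / ((N : ℝ) * Real.exp 1) := by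
      rw [Real.exp_sub, Real.exp_sub, Real.exp_log hnR, Real.exp_log hNR]
      rw [div_div]
    rw [hE, hcast]
    apply div_lt_div_of_pos_left hnR hdR
    have hd2N : (d : ℝ) ≤ 2 * N := by exact_mod_cast h2
    nlinarith
  · have hE : Real.exp (Real.log n - Real.log N - 1 + 1) = (n : ℝ) / (N : ℝ) := by
      have h : Real.log n - Real.log N - 1 + 1 = Real.log n - Real.log N := by ring
      rw [h, Real.exp_sub, Real.exp_log hnR, Real.exp_log hNR]
    rw [hE, hcast]
    apply div_le_div_of_nonneg_left hnR.le hNR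
    exact_mod_cast h1.le

end Stmt6Aux

open Stmt6Aux in
theorem stmt6 (r n N : ℕ) (hr : 1 ≤ r) (hn : 1 ≤ n) (hN : 1 ≤ N) :
    (∑ d ∈ n.divisors.filter (fun d => N < d ∧ d ≤ 2 * N), (tauP r d : ℝ)) ≤
      Real.log (2 * Real.exp 1 * N) ^ (r - 1) * (hooleyDelta (r + 1) n : ℝ) := by
  classical
  obtain ⟨r', rfl⟩ : ∃ r', r = r' + 1 := ⟨r - 1, by omega⟩
  have hn0 : 0 < n := hn
  set F : Finset ℕ := n.divisors.filter (fun d => N < d ∧ d ≤ 2 * N) with hF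
  set K : ℕ := ⌊Real.log (2 * (N : ℝ))⌋₊ + 1 with hK
  have hK0 : 0 < K := Nat.succ_pos _
  -- the boxes attached to a class
  set uc : (Fin r' → Fin K) → (Fin (r' + 1) → ℝ) :=
    fun c => Fin.snoc (fun i => Real.log (Mv (c i)) - 1)
      (Real.log n - Real.log N - 1) with huc
  -- class of a tuple
  set cls : (Fin (r' + 1) → ℕ) → (Fin r' → Fin K) := fun l i =>
    ⟨min ⌊Real.log (l i.castSucc)⌋₊ (K - 1),
      Nat.lt_of_le_of_lt (Nat.min_le_right _ _) (Nat.sub_lt hK0 Nat.one_pos)⟩ with hcls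
  -- main counting inequality in ℕ
  have main : (∑ d ∈ F, tauP (r' + 1) d) ≤ K ^ r' * hooleyDelta (r' + 1 + 1) n := by
    have h1 : ∀ d ∈ F, tauP (r' + 1) d = (perD (r' + 1) d).card := by
      intro d hd
      have hd0 : 0 < d := by
        simp only [hF, Finset.mem_filter] at hd
        omega
      exact tauP_eq_perD _ _ hd0
    rw [Finset.sum_congr rfl h1, ← Finset.card_sigma]
    have h3 : (F.sigma (fun d => perD (r' + 1) d)).card ≤
        ((Finset.univ : Finset (Fin r' → Fin K)).sigma
          (fun c => hbox (r' + 1) (uc c) n)).card := by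
      apply Finset.card_le_card_of_injOn
        (fun p => ⟨cls p.2, Fin.snoc (fun i => p.2 i.castSucc) (n / ∏ i, p.2 i)⟩)
      · -- maps into
        rintro ⟨d, l⟩ hp
        rw [Finset.mem_coe, Finset.mem_sigma] at hp
        obtain ⟨hdF, hlp⟩ := hp
        simp only [hF, Finset.mem_filter, Nat.mem_divisors] at hdF
        obtain ⟨⟨hdn, -⟩, hNd, hd2N⟩ := hdF
        have hprod : ∏ i, l i = d := by
          have h' := hlp
          simp only [perD, Finset.mem_filter] at h'
          exact h'.2
        have hd0 : 0 < d := lt_of_le_of_lt (Nat.zero_le N) hNd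
        have hl1 : ∀ i, 1 ≤ l i := by
          intro i
          rcases Nat.eq_zero_or_pos (l i) with h0 | h
          · exfalso
            have h00 : ∏ i, l i = 0 := Finset.prod_eq_zero (Finset.mem_univ i) h0
            omega
          · exact h
        have hld : ∀ i, l i ∣ d := fun i =>
          hprod ▸ Finset.dvd_prod_of_mem l (Finset.mem_univ i)
        have hlle : ∀ i, l i ≤ d := fun i => Nat.le_of_dvd hd0 (hld i)
        rw [Finset.mem_coe, Finset.mem_sigma]
        refine ⟨Finset.mem_univ _, ?_⟩
        simp only [hbox, Finset.mem_filter]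
        refine ⟨?_, ?_, ?_⟩
        · rw [Fintype.mem_piFinset]
          intro k
          rw [Finset.mem_range, Nat.lt_succ_iff]
          induction k using Fin.lastCases with
          | last =>
            simp only [Fin.snoc_last]
            exact Nat.div_le_self _ _
          | cast i =>
            simp only [Fin.snoc_castSucc]
            exact (hlle _).trans (Nat.le_of_dvd hn0 hdn)
        · have hsplitl : (∏ i : Fin r', l i.castSucc) * l (Fin.last r') = d := by
            rw [← hprod, Fin.prod_univ_castSucc]
          have hsplitg :
              (∏ k, Fin.snoc (fun i => l i.castSucc) (n / ∏ i, l i) k)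
                = (∏ i : Fin r', l i.castSucc) * (n / d) := by
            rw [Fin.prod_univ_castSucc]
            simp only [Fin.snoc_castSucc, Fin.snoc_last, hprod]
          refine Dvd.intro (l (Fin.last r')) ?_
          rw [hsplitg]
          calc (∏ i : Fin r', l i.castSucc) * (n / d) * l (Fin.last r')
              = ((∏ i : Fin r', l i.castSucc) * l (Fin.last r')) * (n / d) := by ring
            _ = d * (n / d) := by rw [hsplitl]
            _ = n := Nat.mul_div_cancel' hdn
        · intro k
          induction k using Fin.lastCases with
          | last =>
            simp only [huc, Fin.snoc_last, hprod]
            exact boxB n N d hN hn0 hdn hNd hd2N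
          | cast i =>
            simp only [huc, hcls, Fin.snoc_castSucc]
            have hfloorle : ⌊Real.log ((l i.castSucc : ℕ) : ℝ)⌋₊ ≤ K - 1 := by
              have h2 : ⌊Real.log ((l i.castSucc : ℕ) : ℝ)⌋₊ ≤ ⌊Real.log (2 * (N : ℝ))⌋₊ := by
                apply Nat.floor_le_floor
                apply Real.log_le_log
                · exact_mod_cast hl1 i.castSucc
                · have hle2N : l i.castSucc ≤ 2 * N := (hlle _).trans hd2N
                  exact_mod_cast hle2N
              omega
            rw [min_eq_left hfloorle]
            exact boxA (l i.castSucc) (hl1 _)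
      · -- injectivity
        rintro ⟨d, l⟩ hp ⟨d', l'⟩ hq heq
        rw [Finset.mem_coe, Finset.mem_sigma] at hp hq
        obtain ⟨hdF, hlp⟩ := hp
        obtain ⟨hdF', hlp'⟩ := hq
        simp only [hF, Finset.mem_filter, Nat.mem_divisors] at hdF hdF'
        have hprod : ∏ i, l i = d := by
          have h' := hlp
          simp only [perD, Finset.mem_filter] at h'
          exact h'.2
        have hprod' : ∏ i, l' i = d' := by
          have h' := hlp'
          simp only [perD, Finset.mem_filter] at h'
          exact h'.2
        have hdn : d ∣ n := hdF.1.1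
        have hdn' : d' ∣ n := hdF'.1.1
        have hl1 : ∀ i, 1 ≤ l i := by
          intro i
          rcases Nat.eq_zero_or_pos (l i) with h0 | h
          · exfalso
            have h00 : ∏ i, l i = 0 := Finset.prod_eq_zero (Finset.mem_univ i) h0
            have hd0 : 0 < d := lt_of_le_of_lt (Nat.zero_le N) hdF.2.1
            omega
          · exact h
        obtain ⟨hfst, hsnd⟩ := Sigma.mk.inj_iff.1 heq
        have hsnoc := eq_of_heq hsnd
        have hcast : ∀ i : Fin r', l i.castSucc = l' i.castSucc := by
          intro i
          have h := congrFun hsnoc i.castSucc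
          simpa [Fin.snoc_castSucc] using h
        have hlastdiv : n / d = n / d' := by
          have h := congrFun hsnoc (Fin.last r')
          simpa [Fin.snoc_last, hprod, hprod'] using h
        have hdd' : d = d' := by
          have e1 : n / (n / d) = d := Nat.div_div_self hdn (by omega)
          have e2 : n / (n / d') = d' := Nat.div_div_self hdn' (by omega)
          rw [← e1, ← e2, hlastdiv]
        have hP : (∏ i : Fin r', l i.castSucc) = ∏ i : Fin r', l' i.castSucc :=
          Finset.prod_congr rfl (fun i _ => hcast i)
        have hPpos : 0 < ∏ i : Fin r', l i.castSucc :=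
          Finset.prod_pos (fun i _ => hl1 _)
        have hlast : l (Fin.last r') = l' (Fin.last r') := by
          have e1 : (∏ i : Fin r', l i.castSucc) * l (Fin.last r') = d := by
            rw [← hprod, Fin.prod_univ_castSucc]
          have e2 : (∏ i : Fin r', l' i.castSucc) * l' (Fin.last r') = d' := by
            rw [← hprod', Fin.prod_univ_castSucc]
          apply Nat.eq_of_mul_eq_mul_left hPpos
          rw [e1, hdd', ← e2, hP]
        have hll' : l = l' := by
          funext k
          induction k using Fin.lastCases with
          | last => exact hlast
          | cast i => exact hcast i
        simp only [Sigma.mk.inj_iff]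
        exact ⟨hdd', heq_of_eq hll'⟩
    refine h3.trans ?_
    rw [Finset.card_sigma]
    calc ∑ c : Fin r' → Fin K, (hbox (r' + 1) (uc c) n).card
        ≤ ∑ _c : Fin r' → Fin K, hooleyDelta (r' + 1 + 1) n := by
          apply Finset.sum_le_sum
          intro c _
          rw [← hooleyCount_eq_hbox (r' + 1) (uc c) n hn0]
          exact hooleyCount_le_delta (r' + 1) (uc c) n hn0
      _ = K ^ r' * hooleyDelta (r' + 1 + 1) n := by
          rw [Finset.sum_const, Finset.card_univ]
          simp [Fintype.card_fun, mul_comm]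
  -- pass to the reals
  have hKR : (K : ℝ) ≤ Real.log (2 * Real.exp 1 * N) := by
    have hlog : Real.log (2 * Real.exp 1 * N) = Real.log (2 * (N : ℝ)) + 1 := by
      rw [show (2 : ℝ) * Real.exp 1 * N = 2 * (N : ℝ) * Real.exp 1 by ring,
        Real.log_mul (by positivity) (Real.exp_ne_zero 1), Real.log_exp]
    have hfl : (⌊Real.log (2 * (N : ℝ))⌋₊ : ℝ) ≤ Real.log (2 * (N : ℝ)) := by
      apply Nat.floor_le
      apply Real.log_nonneg
      have h1N : (1 : ℝ) ≤ N := by exact_mod_cast hN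
      linarith
    rw [hlog, hK]
    push_cast
    linarith
  have hexp : r' + 1 - 1 = r' := by omega
  rw [hexp]
  calc (∑ d ∈ F, (tauP (r' + 1) d : ℝ))
      = ((∑ d ∈ F, tauP (r' + 1) d : ℕ) : ℝ) := by push_cast; rfl
    _ ≤ ((K ^ r' * hooleyDelta (r' + 1 + 1) n : ℕ) : ℝ) := by exact_mod_cast main
    _ = (K : ℝ) ^ r' * (hooleyDelta (r' + 1 + 1) n : ℝ) := by push_cast; ring
    _ ≤ Real.log (2 * Real.exp 1 * N) ^ r' * (hooleyDelta (r' + 1 + 1) n : ℝ) := by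
        apply mul_le_mul_of_nonneg_right _ (Nat.cast_nonneg _)
        exact pow_le_pow_left₀ (Nat.cast_nonneg _) hKR r'
end
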